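/- The kernel of the restriction homomorphism π_r : Aut_e(X_{r+1}) → Aut_e(X_r) is generated by the transpositions (u v) where u, v range over pairs of twin vertices in V_{r+1}; in particular this kernel is an elementary abelian 2-group. -/

import Mathlib

/-- `layerV X a b r` is the vertex set `V(X_{r+1})` of the subgraph `X_{r+1}` of `X`
consisting of all vertices appearing on paths of length `≤ r+1` through the
distinguished edge `e = (a, b)`:  `V(X_1) = {a, b}` and `V(X_{r+1})` consists of
`V(X_r)` together with the neighbors of vertices of `V(X_r)`. -/
def layerV {V : Type*} (X : SimpleGraph V) (a b : V) : ℕ → Set V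
  | 0 => {a, b}
  | r + 1 => layerV X a b r ∪ {v : V | ∃ u ∈ layerV X a b r, X.Adj u v}

/-- `layerAdj X a b r` is the adjacency relation of the subgraph `X_{r+1}`:
`E(X_1) = {(a, b)}` and `E(X_{r+1})` consists of those edges of `X` with an endpoint
in `V(X_r)`. -/
def layerAdj {V : Type*} (X : SimpleGraph V) (a b : V) : ℕ → V → V → Prop
  | 0 => fun x y => (x = a ∧ y = b) ∨ (x = b ∧ y = a)
  | r + 1 => fun x y => X.Adj x y ∧ (x ∈ layerV X a b r ∨ y ∈ layerV X a b r)

/-- `autE X a b r` represents `Aut_e(X_{r+1})`: the automorphisms of the subgraph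
`X_{r+1}` fixing the distinguished edge `e = (a, b)` as a set, viewed as permutations
of `V` which are the identity outside `V(X_{r+1})`. -/
def autE {V : Type*} (X : SimpleGraph V) (a b : V) (r : ℕ) : Set (Equiv.Perm V) :=
  {σ : Equiv.Perm V |
    (∀ v : V, v ∉ layerV X a b r → σ v = v) ∧
    (∀ x y : V, layerAdj X a b r x y ↔ layerAdj X a b r (σ x) (σ y)) ∧
    ({σ a, σ b} : Set V) = {a, b}}

/-- The kernel of the restriction homomorphism `π_r : Aut_e(X_{r+1}) → Aut_e(X_r)`:
those automorphisms of `X_{r+1}` (fixing `e`) which restrict to the identity on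
`X_r`. -/
def kerPi {V : Type*} (X : SimpleGraph V) (a b : V) (r : ℕ) : Set (Equiv.Perm V) :=
  {σ : Equiv.Perm V | σ ∈ autE X a b r ∧ ∀ v ∈ layerV X a b (r - 1), σ v = v}

section Aux

variable {V : Type*} {X : SimpleGraph V} {a b : V}

lemma mem_layerV_ab (hab : X.Adj a b) (k : ℕ) :
    a ∈ layerV X a b k ∧ b ∈ layerV X a b k := by
  induction k with
  | zero => exact ⟨Or.inl rfl, Or.inr rfl⟩
  | succ k ih => exact ⟨Or.inl ih.1, Or.inl ih.2⟩

lemma exists_adj_in_layer (hab : X.Adj a b) (k : ℕ) :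
    ∀ w ∈ layerV X a b k, ∃ w' ∈ layerV X a b k, X.Adj w w' := by
  induction k with
  | zero =>
    rintro w (rfl | rfl)
    · exact ⟨b, Or.inr rfl, hab⟩
    · exact ⟨a, Or.inl rfl, hab.symm⟩
  | succ k ih =>
    rintro w (hw | ⟨u, hu, hadj⟩)
    · obtain ⟨w', hw', h⟩ := ih w hw
      exact ⟨w', Or.inl hw', h⟩
    · exact ⟨u, Or.inl hu, hadj.symm⟩

/-- Extract the pieces of `σ ∈ kerPi X a b (k+1)`. -/
lemma kerPi_spec {σ : Equiv.Perm V} {k : ℕ} (hσ : σ ∈ kerPi X a b (k + 1)) :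
    (∀ v : V, v ∉ layerV X a b (k + 1) → σ v = v) ∧
    (∀ x y : V, layerAdj X a b (k + 1) x y ↔ layerAdj X a b (k + 1) (σ x) (σ y)) ∧
    (∀ v ∈ layerV X a b k, σ v = v) := by
  obtain ⟨⟨h1, h2, _⟩, h4⟩ := hσ
  simp only [Nat.add_sub_cancel] at h4
  exact ⟨h1, h2, h4⟩

/-- `σ ∈ kerPi` preserves neighbor sets in the previous layer. -/
lemma adj_iff_of_kerPi {σ : Equiv.Perm V} {k : ℕ} (hσ : σ ∈ kerPi X a b (k + 1))
    (u : V) {w : V} (hw : w ∈ layerV X a b k) : X.Adj u w ↔ X.Adj (σ u) w := by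
  obtain ⟨-, h2, h4⟩ := kerPi_spec hσ
  have hwfix : σ w = w := h4 w hw
  have := h2 u w
  rw [hwfix] at this
  constructor
  · intro h
    exact ((this.mp ⟨h, Or.inr hw⟩).1)
  · intro h
    exact (this.mpr ⟨h, Or.inr hw⟩).1

/-- a moved point lies in the new layer but not the old one. -/
lemma moved_mem {σ : Equiv.Perm V} {k : ℕ} (hσ : σ ∈ kerPi X a b (k + 1))
    {u : V} (hu : σ u ≠ u) : u ∈ layerV X a b (k + 1) ∧ u ∉ layerV X a b k := by
  obtain ⟨h1, -, h4⟩ := kerPi_spec hσ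
  refine ⟨?_, fun h => hu (h4 u h)⟩
  by_contra h
  exact hu (h1 u h)

/-- The key involution lemma: every element of the kernel squares to one. -/
lemma kerPi_involutive [Fintype V] (htriv : ∀ v : V, (X.neighborSet v).ncard ≤ 3)
    (hab : X.Adj a b) {σ : Equiv.Perm V} {k : ℕ} (hσ : σ ∈ kerPi X a b (k + 1)) :
    ∀ u : V, σ (σ u) = u := by
  intro u
  by_cases hu : σ u = u
  · rw [hu, hu]
  by_contra h3
  -- three distinct moved points u, σ u, σ (σ u)
  set v2 := σ u with hv2
  set v3 := σ v2 with hv3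
  have hne12 : u ≠ v2 := fun h => hu h.symm
  have hne23 : v2 ≠ v3 := fun h => hne12 (σ.injective h)
  have hne13 : u ≠ v3 := fun h => h3 h.symm
  have hu2 : σ v2 ≠ v2 := fun h => hne12 (σ.injective h).symm
  -- u not in old layer, has a neighbor w in old layer
  obtain ⟨huS, hus⟩ := moved_mem hσ hu
  obtain ⟨h2S, h2s⟩ := moved_mem hσ hu2
  have h3s : v3 ∉ layerV X a b k := by
    intro h
    obtain ⟨-, -, h4⟩ := kerPi_spec hσ
    have := h4 v3 h
    exact hu2 (σ.injective this)
  obtain ⟨w, hw, hadjw⟩ : ∃ w ∈ layerV X a b k, X.Adj u w := by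
    rcases huS with h | ⟨w, hw, hadj⟩
    · exact absurd h hus
    · exact ⟨w, hw, hadj.symm⟩
  -- all three are adjacent to w
  have hadj2 : X.Adj v2 w := (adj_iff_of_kerPi hσ u hw).mp hadjw
  have hadj3 : X.Adj v3 w := (adj_iff_of_kerPi hσ v2 hw).mp hadj2
  -- w has another neighbor w' in old layer
  obtain ⟨w', hw', hadjw'⟩ := exists_adj_in_layer hab k w hw
  have hne1 : w' ≠ u := fun h => hus (h ▸ hw')
  have hne2 : w' ≠ v2 := fun h => h2s (h ▸ hw')
  have hne3 : w' ≠ v3 := fun h => h3s (h ▸ hw')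
  -- degree of w is at least 4
  have hsub : ({u, v2, v3, w'} : Set V) ⊆ X.neighborSet w := by
    rintro x (rfl | rfl | rfl | rfl)
    · exact hadjw.symm
    · exact hadj2.symm
    · exact hadj3.symm
    · exact hadjw'
  have hcard : ({u, v2, v3, w'} : Set V).ncard = 4 := by
    rw [Set.ncard_insert_of_notMem (by simp [hne12, hne13, hne1.symm]),
      Set.ncard_insert_of_notMem (by simp [hne23, hne2.symm]),
      Set.ncard_insert_of_notMem (by simp [hne3.symm]), Set.ncard_singleton]
  have := Set.ncard_le_ncard hsub (Set.toFinite _)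
  have := htriv w
  omega

end Aux


section Aux2

variable {V : Type*} {X : SimpleGraph V} {a b : V}

lemma kerPi_one_mem (r : ℕ) : (1 : Equiv.Perm V) ∈ kerPi X a b r :=
  ⟨⟨fun _ _ => rfl, fun _ _ => Iff.rfl, rfl⟩, fun _ _ => rfl⟩

lemma kerPi_fix_ab (hab : X.Adj a b) {r : ℕ} {σ : Equiv.Perm V}
    (hσ : σ ∈ kerPi X a b r) : σ a = a ∧ σ b = b := by
  obtain ⟨ha, hb⟩ := mem_layerV_ab hab (r - 1)
  exact ⟨hσ.2 a ha, hσ.2 b hb⟩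

lemma kerPi_mul_mem (hab : X.Adj a b) {r : ℕ} {σ τ : Equiv.Perm V}
    (hσ : σ ∈ kerPi X a b r) (hτ : τ ∈ kerPi X a b r) : σ * τ ∈ kerPi X a b r := by
  obtain ⟨hσa, hσb⟩ := kerPi_fix_ab hab hσ
  obtain ⟨hτa, hτb⟩ := kerPi_fix_ab hab hτ
  obtain ⟨⟨hσ1, hσ2, -⟩, hσ4⟩ := hσ
  obtain ⟨⟨hτ1, hτ2, -⟩, hτ4⟩ := hτ
  refine ⟨⟨fun v hv => ?_, fun x y => ?_, ?_⟩, fun v hv => ?_⟩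
  · show σ (τ v) = v
    rw [hτ1 v hv, hσ1 v hv]
  · exact (hτ2 x y).trans (hσ2 (τ x) (τ y))
  · show ({σ (τ a), σ (τ b)} : Set V) = {a, b}
    rw [hτa, hτb, hσa, hσb]
  · show σ (τ v) = v
    rw [hτ4 v hv, hσ4 v hv]

lemma kerPi_inv_mem (hab : X.Adj a b) {r : ℕ} {σ : Equiv.Perm V}
    (hσ : σ ∈ kerPi X a b r) : σ⁻¹ ∈ kerPi X a b r := by
  obtain ⟨hσa, hσb⟩ := kerPi_fix_ab hab hσ
  obtain ⟨⟨hσ1, hσ2, -⟩, hσ4⟩ := hσ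
  have key : ∀ v : V, σ v = v → σ⁻¹ v = v := by
    intro v hv
    conv_lhs => rw [← hv]
    exact σ.symm_apply_apply v
  refine ⟨⟨fun v hv => key v (hσ1 v hv), fun x y => ?_, ?_⟩, fun v hv => key v (hσ4 v hv)⟩
  · have := hσ2 (σ⁻¹ x) (σ⁻¹ y)
    rw [show σ (σ⁻¹ x) = x from σ.apply_symm_apply x, show σ (σ⁻¹ y) = y from σ.apply_symm_apply y] at this
    exact this.symm
  · show ({σ⁻¹ a, σ⁻¹ b} : Set V) = {a, b}
    rw [key a hσa, key b hσb]

end Aux2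


/-- The set of transpositions `(u v)` where `u, v` range over pairs of twin vertices
of `V_{r+1} = V(X_{r+1}) \ V(X_r)`, i.e. `u ≠ v` with equal neighbor sets
`f(u) = f(v)` in `V(X_r)`. -/
def twinTranspositions {V : Type*} [DecidableEq V] (X : SimpleGraph V) (a b : V)
    (r : ℕ) : Set (Equiv.Perm V) :=
  {π : Equiv.Perm V | ∃ u v : V,
    u ∈ layerV X a b r ∧ u ∉ layerV X a b (r - 1) ∧
    v ∈ layerV X a b r ∧ v ∉ layerV X a b (r - 1) ∧ u ≠ v ∧
    {w ∈ layerV X a b (r - 1) | X.Adj u w} = {w ∈ layerV X a b (r - 1) | X.Adj v w} ∧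
    π = Equiv.swap u v}

section Aux3

variable {V : Type*} [DecidableEq V] {X : SimpleGraph V} {a b : V}

lemma twin_mem_kerPi (hab : X.Adj a b) {k : ℕ} {π : Equiv.Perm V}
    (hπ : π ∈ twinTranspositions X a b (k + 1)) : π ∈ kerPi X a b (k + 1) := by
  obtain ⟨u, v, hu, hus, hv, hvs, huv, htwin, rfl⟩ := hπ
  simp only [Nat.add_sub_cancel] at hus hvs htwin
  -- the swap fixes everything in the old layer
  have hfix : ∀ z ∈ layerV X a b k, Equiv.swap u v z = z := fun z hz =>
    Equiv.swap_apply_of_ne_of_ne (fun h => hus (h ▸ hz)) (fun h => hvs (h ▸ hz))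
  -- the swap preserves adjacency to the old layer
  have hadjsw : ∀ z w : V, w ∈ layerV X a b k → X.Adj z w →
      X.Adj (Equiv.swap u v z) w := by
    intro z w hw hzw
    by_cases hzu : z = u
    · subst hzu
      rw [Equiv.swap_apply_left]
      have : w ∈ {w ∈ layerV X a b k | X.Adj v w} := htwin ▸ ⟨hw, hzw⟩
      exact this.2
    by_cases hzv : z = v
    · subst hzv
      rw [Equiv.swap_apply_right]
      have : w ∈ {w ∈ layerV X a b k | X.Adj u w} := htwin.symm ▸ ⟨hw, hzw⟩
      exact this.2
    · rw [Equiv.swap_apply_of_ne_of_ne hzu hzv]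
      exact hzw
  -- forward direction of adjacency preservation
  have hfwd : ∀ x y : V, layerAdj X a b (k + 1) x y →
      layerAdj X a b (k + 1) (Equiv.swap u v x) (Equiv.swap u v y) := by
    rintro x y ⟨hxy, hx | hy⟩
    · rw [hfix x hx]
      exact ⟨(hadjsw y x hx hxy.symm).symm, Or.inl hx⟩
    · rw [hfix y hy]
      exact ⟨hadjsw x y hy hxy, Or.inr hy⟩
  refine ⟨⟨fun w hw => ?_, fun x y => ⟨hfwd x y, fun h => ?_⟩, ?_⟩, fun w hw => ?_⟩
  · exact Equiv.swap_apply_of_ne_of_ne (fun h => hw (h ▸ hu)) (fun h => hw (h ▸ hv))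
  · have := hfwd _ _ h
    rwa [Equiv.swap_apply_self, Equiv.swap_apply_self] at this
  · obtain ⟨ha, hb⟩ := mem_layerV_ab hab k
    show ({Equiv.swap u v a, Equiv.swap u v b} : Set V) = {a, b}
    rw [hfix a ha, hfix b hb]
  · simp only [Nat.add_sub_cancel] at hw
    exact hfix w hw

lemma kerPi_subset_closure [Fintype V] (htriv : ∀ v : V, (X.neighborSet v).ncard ≤ 3)
    (hab : X.Adj a b) {k : ℕ} :
    ∀ n (σ : Equiv.Perm V), σ ∈ kerPi X a b (k + 1) → σ.support.card ≤ n →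
      σ ∈ Subgroup.closure (twinTranspositions X a b (k + 1)) := by
  intro n
  induction n with
  | zero =>
    intro σ hσ hcard
    have : σ.support = ∅ := Finset.card_eq_zero.mp (Nat.le_zero.mp hcard)
    rw [Equiv.Perm.support_eq_empty_iff.mp this]
    exact Subgroup.one_mem _
  | succ n ih =>
    intro σ hσ hcard
    by_cases h1 : σ = 1
    · rw [h1]; exact Subgroup.one_mem _
    obtain ⟨u, hu⟩ : ∃ u : V, σ u ≠ u := by
      by_contra h
      push_neg at h
      exact h1 (Equiv.ext h)
    have hinv := kerPi_involutive htriv hab hσ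
    set v := σ u with hv
    have huv : u ≠ v := fun h => hu h.symm
    have hσv : σ v = u := hinv u
    have hvmoved : σ v ≠ v := by rw [hσv]; exact huv
    obtain ⟨huS, hus⟩ := moved_mem hσ hu
    obtain ⟨hvS, hvs⟩ := moved_mem hσ hvmoved
    set τ := Equiv.swap u v with hτ
    have htw : τ ∈ twinTranspositions X a b (k + 1) := by
      refine ⟨u, v, huS, by simpa using hus, hvS, by simpa using hvs, huv, ?_, rfl⟩
      simp only [Nat.add_sub_cancel]
      ext w
      simp only [Set.mem_setOf_eq, and_congr_right_iff]
      intro hw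
      exact adj_iff_of_kerPi hσ u hw
    have hστ : σ * τ ∈ kerPi X a b (k + 1) :=
      kerPi_mul_mem hab hσ (twin_mem_kerPi hab htw)
    -- the support strictly decreases
    have hsub : (σ * τ).support ⊆ σ.support.erase u := by
      intro w hw
      rw [Equiv.Perm.mem_support, Equiv.Perm.mul_apply] at hw
      rw [Finset.mem_erase, Equiv.Perm.mem_support]
      constructor
      · rintro rfl
        exact hw (by rw [hτ, Equiv.swap_apply_left, hσv])
      · intro hww
        apply hw
        have hwu : w ≠ u := by
          intro h
          rw [h] at hww
          exact hu hww
        have hwv : w ≠ v := by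
          intro h
          rw [h] at hww
          exact hvmoved hww
        rw [hτ, Equiv.swap_apply_of_ne_of_ne hwu hwv, hww]
    have husup : u ∈ σ.support := Equiv.Perm.mem_support.mpr hu
    have hlt : (σ * τ).support.card ≤ n := by
      have h1 := Finset.card_le_card hsub
      have h2 := Finset.card_erase_of_mem husup
      have h3 : 1 ≤ σ.support.card := Finset.card_pos.mpr ⟨u, husup⟩
      omega
    have hmem := ih (σ * τ) hστ hlt
    have : σ = (σ * τ) * τ := by
      rw [mul_assoc, hτ, Equiv.swap_mul_self, mul_one]
    rw [this]
    exact Subgroup.mul_mem _ hmem (Subgroup.subset_closure htw)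

end Aux3

/-- Let `X` be a connected trivalent graph with distinguished edge `e = (a, b)`.
The kernel of the restriction homomorphism `π_r : Aut_e(X_{r+1}) → Aut_e(X_r)` is
generated by the transpositions `(u v)` over pairs of twin vertices `u, v ∈ V_{r+1}`;
in particular the kernel is an elementary abelian `2`-group. -/
theorem kernel_generated_by_twin_transpositions {V : Type*} [Fintype V] [DecidableEq V]
    (X : SimpleGraph V) (hconn : X.Connected)
    (htriv : ∀ v : V, (X.neighborSet v).ncard ≤ 3)
    (a b : V) (hab : X.Adj a b) (r : ℕ) (hr : 1 ≤ r) :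
    ((Subgroup.closure (twinTranspositions X a b r) : Subgroup (Equiv.Perm V)) :
        Set (Equiv.Perm V)) = kerPi X a b r ∧
      (∀ σ ∈ kerPi X a b r, σ * σ = 1) ∧
      (∀ σ ∈ kerPi X a b r, ∀ τ ∈ kerPi X a b r, σ * τ = τ * σ) := by
  obtain ⟨k, rfl⟩ : ∃ k, r = k + 1 := ⟨r - 1, (Nat.succ_pred_eq_of_pos hr).symm⟩
  have hsq : ∀ σ ∈ kerPi X a b (k + 1), σ * σ = 1 := by
    intro σ hσ
    ext u
    exact kerPi_involutive htriv hab hσ u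
  refine ⟨?_, hsq, ?_⟩
  · let K : Subgroup (Equiv.Perm V) :=
      { carrier := kerPi X a b (k + 1)
        mul_mem' := fun h1 h2 => kerPi_mul_mem hab h1 h2
        one_mem' := kerPi_one_mem _
        inv_mem' := fun h => kerPi_inv_mem hab h }
    apply Set.eq_of_subset_of_subset
    · exact (Subgroup.closure_le K).mpr (fun π hπ => twin_mem_kerPi hab hπ)
    · intro σ hσ
      exact kerPi_subset_closure htriv hab σ.support.card σ hσ le_rfl
  · intro σ hσ τ hτ
    have h2 : (σ * τ) * (σ * τ) = 1 := hsq _ (kerPi_mul_mem hab hσ hτ)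
    calc σ * τ = (σ * τ)⁻¹ := (inv_eq_of_mul_eq_one_right h2).symm
      _ = τ⁻¹ * σ⁻¹ := mul_inv_rev _ _
      _ = τ * σ := by
          rw [inv_eq_of_mul_eq_one_right (hsq σ hσ), inv_eq_of_mul_eq_one_right (hsq τ hτ)]
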